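/- The Hadamard product of the Cayley determinant Cdet_{2n}(X) with the polynomial F = Σ_{(j_1,...,j_n) ∈ [n]^n} Π_{i=1}^n x_{2i-1, j_i} x_{2i, n+j_i} equals sgn(ρ(1_n)) · Σ_{π ∈ S_n} x_{1,π(1)} x_{2,n+π(1)} ··· x_{2n-1,π(n)} x_{2n,n+π(n)}. -/

import Mathlib

/-- `σ ∈ S_{2n}` is the interleaving `ρ(π)` of `π ∈ S_n`. -/
def Interleaves (n : ℕ) (π : Equiv.Perm (Fin n)) (σ : Equiv.Perm (Fin (2 * n))) : Prop :=
  ∀ i : Fin n,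
    σ ⟨2 * i.val, by have := i.isLt; omega⟩ =
      ⟨(π i).val, by have := (π i).isLt; omega⟩ ∧
    σ ⟨2 * i.val + 1, by have := i.isLt; omega⟩ =
      ⟨n + (π i).val, by have := (π i).isLt; omega⟩

/-- Hadamard (coefficientwise) product on the free algebra. -/
noncomputable def hadamard {F : Type*} [CommRing F] {X : Type*}
    (f g : MonoidAlgebra F (FreeMonoid X)) : MonoidAlgebra F (FreeMonoid X) :=
  MonoidAlgebra.ofCoeff (Finsupp.zipWith (· * ·) (mul_zero 0) f.coeff g.coeff)

/-- The Cayley determinant `Cdet_n(X)` in the free algebra on the `x_{ij}`. -/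
noncomputable def Cdet (F : Type*) [Field F] (n : ℕ) :
    MonoidAlgebra F (FreeMonoid (Fin n × Fin n)) :=
  ∑ σ : Equiv.Perm (Fin n),
    MonoidAlgebra.single ((List.ofFn fun i : Fin n => FreeMonoid.of (i, σ i)).prod)
      (((Equiv.Perm.sign σ : ℤ) : F))

/-- The polynomial `F = Σ_{(j_1,…,j_n) ∈ [n]^n} Π_{i=1}^n x_{2i-1,j_i} x_{2i,n+j_i}`. -/
noncomputable def interleavePoly (F : Type*) [Field F] (n : ℕ) :
    MonoidAlgebra F (FreeMonoid (Fin (2 * n) × Fin (2 * n))) :=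
  ∑ j : Fin n → Fin n,
    MonoidAlgebra.single
      ((List.ofFn fun i : Fin n =>
        FreeMonoid.of ((⟨2 * i.val, by have := i.isLt; omega⟩ : Fin (2 * n)),
                       (⟨(j i).val, by have := (j i).isLt; omega⟩ : Fin (2 * n))) *
        FreeMonoid.of ((⟨2 * i.val + 1, by have := i.isLt; omega⟩ : Fin (2 * n)),
                       (⟨n + (j i).val, by have := (j i).isLt; omega⟩ : Fin (2 * n)))).prod)
      (1 : F)

/-! ### Auxiliary lemmas -/

lemma pair_prod {M : Type*} [Monoid M] :
    ∀ (n : ℕ) (g : Fin (2 * n) → M) (h : Fin n → M),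
    (∀ i : Fin n, h i = g ⟨2 * i.val, by have := i.isLt; omega⟩ *
        g ⟨2 * i.val + 1, by have := i.isLt; omega⟩) →
    (List.ofFn g).prod = (List.ofFn h).prod := by
  intro n
  induction n with
  | zero => intro g h _; rfl
  | succ n ih =>
    intro g h hh
    have e1 : List.ofFn g = g 0 :: List.ofFn (g ∘ Fin.succ) := List.ofFn_succ (f := g)
    have e2 : List.ofFn (g ∘ Fin.succ) = (g ∘ Fin.succ) 0 ::
        List.ofFn (g ∘ Fin.succ ∘ Fin.succ) := List.ofFn_succ
    have e3 : List.ofFn h = h 0 :: List.ofFn (h ∘ Fin.succ) := List.ofFn_succ (f := h)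
    rw [e1, e2, e3, List.prod_cons, List.prod_cons, List.prod_cons]
    have hrec := ih (g ∘ Fin.succ ∘ Fin.succ) (h ∘ Fin.succ) ?_
    · rw [hrec]
      have h0 : h 0 = g 0 * (g ∘ Fin.succ) 0 := by
        have := hh 0
        convert this using 3 <;> rfl
      rw [h0, mul_assoc]
    · intro i
      have := hh i.succ
      convert this using 3 <;> rfl

lemma prod_map_of {X : Type*} (l : List X) :
    (l.map (FreeMonoid.of)).prod = FreeMonoid.ofList l := by
  induction l with
  | nil => rfl
  | cons a t ih => simp [ih, FreeMonoid.ofList_cons]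

lemma of_prod_inj {X : Type*} {m : ℕ} {f g : Fin m → X}
    (h : (List.ofFn fun i => FreeMonoid.of (f i)).prod =
         (List.ofFn fun i => FreeMonoid.of (g i)).prod) : f = g := by
  rw [show (List.ofFn fun i => FreeMonoid.of (f i)) = (List.ofFn f).map FreeMonoid.of by
        rw [List.map_ofFn]; rfl,
      show (List.ofFn fun i => FreeMonoid.of (g i)) = (List.ofFn g).map FreeMonoid.of by
        rw [List.map_ofFn]; rfl, prod_map_of, prod_map_of] at h
  exact List.ofFn_inj.mp (FreeMonoid.ofList.injective h)

lemma blocksum (n : ℕ) (π : Equiv.Perm (Fin n)) :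
    ∃ δ : Equiv.Perm (Fin (2 * n)), Equiv.Perm.sign δ = 1 ∧
      (∀ i : Fin n, δ ⟨i.val, by have := i.isLt; omega⟩ =
        ⟨(π i).val, by have := (π i).isLt; omega⟩) ∧
      (∀ i : Fin n, δ ⟨n + i.val, by have := i.isLt; omega⟩ =
        ⟨n + (π i).val, by have := (π i).isLt; omega⟩) := by
  have hnn : n + n = 2 * n := by omega
  refine ⟨(finSumFinEquiv.trans (finCongr hnn)).permCongr (Equiv.sumCongr π π), ?_, ?_, ?_⟩
  · rw [Equiv.Perm.sign_permCongr, Equiv.Perm.sign_sumCongr]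
    exact Int.units_mul_self _
  · intro i
    have h1 : (finSumFinEquiv.trans (finCongr hnn)) (Sum.inl i) =
        (⟨i.val, by have := i.isLt; omega⟩ : Fin (2 * n)) := by
      apply Fin.ext; simp; try omega
    have h2 : (finSumFinEquiv.trans (finCongr hnn)) (Sum.inl (π i)) =
        (⟨(π i).val, by have := (π i).isLt; omega⟩ : Fin (2 * n)) := by
      apply Fin.ext; simp; try omega
    rw [← h1, Equiv.permCongr_apply, Equiv.symm_apply_apply]
    simpa using h2
  · intro i
    have h1 : (finSumFinEquiv.trans (finCongr hnn)) (Sum.inr i) =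
        (⟨n + i.val, by have := i.isLt; omega⟩ : Fin (2 * n)) := by
      apply Fin.ext; simp; try omega
    have h2 : (finSumFinEquiv.trans (finCongr hnn)) (Sum.inr (π i)) =
        (⟨n + (π i).val, by have := (π i).isLt; omega⟩ : Fin (2 * n)) := by
      apply Fin.ext; simp; try omega
    rw [← h1, Equiv.permCongr_apply, Equiv.symm_apply_apply]
    simpa using h2

lemma sign_interleave (n : ℕ) (ρ : Equiv.Perm (Fin n) → Equiv.Perm (Fin (2 * n)))
    (hρ : ∀ π, Interleaves n π (ρ π)) (π : Equiv.Perm (Fin n)) :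
    Equiv.Perm.sign (ρ π) = Equiv.Perm.sign (ρ 1) := by
  obtain ⟨δ, hsgn, hδ1, hδ2⟩ := blocksum n π
  have hmul : ρ π = δ * ρ 1 := by
    apply Equiv.ext
    intro k
    have hk : k.val < 2 * n := k.isLt
    rcases Nat.even_or_odd k.val with ⟨i, hi⟩ | ⟨i, hi⟩
    · have hin : i < n := by omega
      have hkk : k = ⟨2 * i, by omega⟩ := Fin.ext (by simp; omega)
      rw [hkk]
      have h1 := (hρ π ⟨i, hin⟩).1
      have h2 := (hρ 1 ⟨i, hin⟩).1
      simp only [Equiv.Perm.mul_apply]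
      rw [h1, h2]
      simpa using (hδ1 ⟨i, hin⟩).symm
    · have hin : i < n := by omega
      have hkk : k = ⟨2 * i + 1, by omega⟩ := Fin.ext (by simp; omega)
      rw [hkk]
      have h1 := (hρ π ⟨i, hin⟩).2
      have h2 := (hρ 1 ⟨i, hin⟩).2
      simp only [Equiv.Perm.mul_apply]
      rw [h1, h2]
      simpa using (hδ2 ⟨i, hin⟩).symm
  rw [hmul, map_mul, hsgn, one_mul]

lemma hadamard_apply {F : Type*} [CommRing F] {X : Type*}
    (f g : MonoidAlgebra F (FreeMonoid X)) (w : FreeMonoid X) :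
    (hadamard f g).coeff w = f.coeff w * g.coeff w := rfl

lemma hadamard_sum {F : Type*} [CommRing F] {X : Type*} {α β : Type*}
    (s : Finset α) (t : Finset β) (f : α → MonoidAlgebra F (FreeMonoid X))
    (g : β → MonoidAlgebra F (FreeMonoid X)) :
    hadamard (∑ a ∈ s, f a) (∑ b ∈ t, g b) = ∑ a ∈ s, ∑ b ∈ t, hadamard (f a) (g b) := by
  ext w
  rw [hadamard_apply, MonoidAlgebra.coeff_sum, MonoidAlgebra.coeff_sum, Finset.sum_apply',
    Finset.sum_apply', Finset.sum_mul_sum, MonoidAlgebra.coeff_sum, Finset.sum_apply']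
  refine Finset.sum_congr rfl fun a _ => ?_
  rw [MonoidAlgebra.coeff_sum, Finset.sum_apply']
  exact Finset.sum_congr rfl fun b _ => (hadamard_apply _ _ _).symm

lemma hadamard_single {F : Type*} [CommRing F] {X : Type*} [DecidableEq (FreeMonoid X)]
    (a b : FreeMonoid X) (c d : F) :
    hadamard (MonoidAlgebra.single a c) (MonoidAlgebra.single b d) =
      if a = b then MonoidAlgebra.single a (c * d) else 0 := by
  ext w
  rw [hadamard_apply, apply_ite (fun f : MonoidAlgebra F (FreeMonoid X) => f.coeff w)]
  simp only [MonoidAlgebra.coeff_single, MonoidAlgebra.coeff_zero, Finsupp.single_apply,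
    Finsupp.zero_apply]
  split_ifs <;> simp_all

/-- The "target" function on `Fin (2n)` associated to `j : Fin n → Fin n`. -/
def tj (n : ℕ) (j : Fin n → Fin n) (k : Fin (2 * n)) : Fin (2 * n) :=
  if k.val % 2 = 0 then
    ⟨(j ⟨k.val / 2, by have := k.isLt; omega⟩).val,
      by have := (j ⟨k.val / 2, by have := k.isLt; omega⟩).isLt; omega⟩
  else
    ⟨n + (j ⟨k.val / 2, by have := k.isLt; omega⟩).val,
      by have := (j ⟨k.val / 2, by have := k.isLt; omega⟩).isLt; omega⟩

lemma tj_even (n : ℕ) (j : Fin n → Fin n) (i : Fin n) :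
    tj n j ⟨2 * i.val, by have := i.isLt; omega⟩ =
      ⟨(j i).val, by have := (j i).isLt; omega⟩ := by
  rw [tj, if_pos (by simp)]
  have harg : ∀ m (hm : m < n), m = i.val →
      (⟨(j ⟨m, hm⟩).val, by have := (j ⟨m, hm⟩).isLt; omega⟩ : Fin (2 * n)) =
      ⟨(j i).val, by have := (j i).isLt; omega⟩ := by
    rintro m hm rfl
    congr 1
  exact harg _ _ (by simp)

lemma tj_odd (n : ℕ) (j : Fin n → Fin n) (i : Fin n) :
    tj n j ⟨2 * i.val + 1, by have := i.isLt; omega⟩ =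
      ⟨n + (j i).val, by have := (j i).isLt; omega⟩ := by
  rw [tj, if_neg (by simp [Nat.add_mod])]
  have harg : ∀ m (hm : m < n), m = i.val →
      (⟨n + (j ⟨m, hm⟩).val, by have := (j ⟨m, hm⟩).isLt; omega⟩ : Fin (2 * n)) =
      ⟨n + (j i).val, by have := (j i).isLt; omega⟩ := by
    rintro m hm rfl
    congr 1
  exact harg _ _ (by simp; omega)

/-- The interleaved word of `j` as a word over `Fin (2n)`. -/
lemma interleaveWord (n : ℕ) (j : Fin n → Fin n) :
    (List.ofFn fun i : Fin n =>
        FreeMonoid.of ((⟨2 * i.val, by have := i.isLt; omega⟩ : Fin (2 * n)),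
                       (⟨(j i).val, by have := (j i).isLt; omega⟩ : Fin (2 * n))) *
        FreeMonoid.of ((⟨2 * i.val + 1, by have := i.isLt; omega⟩ : Fin (2 * n)),
                       (⟨n + (j i).val, by have := (j i).isLt; omega⟩ : Fin (2 * n)))).prod
    = (List.ofFn fun k : Fin (2 * n) => FreeMonoid.of (k, tj n j k)).prod := by
  refine (pair_prod n _ _ ?_).symm
  intro i
  rw [tj_even, tj_odd]

lemma word_rho (n : ℕ) (ρ : Equiv.Perm (Fin n) → Equiv.Perm (Fin (2 * n)))
    (hρ : ∀ π, Interleaves n π (ρ π)) (π : Equiv.Perm (Fin n)) :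
    (List.ofFn fun k : Fin (2 * n) => FreeMonoid.of (k, ρ π k)).prod
    = (List.ofFn fun k : Fin (2 * n) => FreeMonoid.of (k, tj n (⇑π) k)).prod := by
  congr 1
  rw [List.ofFn_inj]
  funext k
  congr 1
  have hk : k.val < 2 * n := k.isLt
  rcases Nat.even_or_odd k.val with ⟨i, hi⟩ | ⟨i, hi⟩
  · have hin : i < n := by omega
    have hkk : k = ⟨2 * i, by omega⟩ := Fin.ext (by simp; omega)
    rw [hkk, (hρ π ⟨i, hin⟩).1, tj_even n (⇑π) ⟨i, hin⟩]
  · have hin : i < n := by omega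
    have hkk : k = ⟨2 * i + 1, by omega⟩ := Fin.ext (by simp; omega)
    rw [hkk, (hρ π ⟨i, hin⟩).2, tj_odd n (⇑π) ⟨i, hin⟩]

lemma key (n : ℕ) (ρ : Equiv.Perm (Fin n) → Equiv.Perm (Fin (2 * n)))
    (hρ : ∀ π, Interleaves n π (ρ π)) (σ : Equiv.Perm (Fin (2 * n)))
    (j : Fin n → Fin n)
    (h : (List.ofFn fun k : Fin (2 * n) => FreeMonoid.of (k, σ k)).prod
       = (List.ofFn fun k : Fin (2 * n) => FreeMonoid.of (k, tj n j k)).prod) :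
    ∃ π : Equiv.Perm (Fin n), σ = ρ π ∧ j = ⇑π := by
  have hfun : (fun k : Fin (2 * n) => ((k, σ k) : Fin (2 * n) × Fin (2 * n)))
      = fun k => (k, tj n j k) := of_prod_inj h
  have hσ : ∀ k, σ k = tj n j k := fun k =>
    congrArg Prod.snd (congrFun hfun k)
  have hσe : ∀ i : Fin n, σ ⟨2 * i.val, by have := i.isLt; omega⟩ =
      ⟨(j i).val, by have := (j i).isLt; omega⟩ := fun i => (hσ _).trans (tj_even n j i)
  have hσo : ∀ i : Fin n, σ ⟨2 * i.val + 1, by have := i.isLt; omega⟩ =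
      ⟨n + (j i).val, by have := (j i).isLt; omega⟩ := fun i => (hσ _).trans (tj_odd n j i)
  have hinj : Function.Injective j := by
    intro a b hab
    have : σ ⟨2 * a.val, by have := a.isLt; omega⟩ =
        σ ⟨2 * b.val, by have := b.isLt; omega⟩ := by
      rw [hσe a, hσe b]; simp [hab]
    have h2 := σ.injective this
    have h3 : 2 * a.val = 2 * b.val := by
      have := congrArg Fin.val h2
      simpa using this
    exact Fin.ext (by omega)
  have hbij : Function.Bijective j := (Finite.injective_iff_bijective).mp hinj
  refine ⟨Equiv.ofBijective j hbij, ?_, rfl⟩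
  apply Equiv.ext
  intro k
  have hk : k.val < 2 * n := k.isLt
  rcases Nat.even_or_odd k.val with ⟨i, hi⟩ | ⟨i, hi⟩
  · have hin : i < n := by omega
    have hkk : k = ⟨2 * i, by omega⟩ := Fin.ext (by simp; omega)
    rw [hkk, hσe ⟨i, hin⟩, (hρ _ ⟨i, hin⟩).1]
    rfl
  · have hin : i < n := by omega
    have hkk : k = ⟨2 * i + 1, by omega⟩ := Fin.ext (by simp; omega)
    rw [hkk, hσo ⟨i, hin⟩, (hρ _ ⟨i, hin⟩).2]
    rfl

/-- `Cdet_{2n} ∘ F = sgn(ρ(1_n)) · Σ_{π ∈ S_n} m_{ρ(π)}`. -/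
theorem hadamard_Cdet_interleavePoly (F : Type*) [Field F] (n : ℕ)
    (ρ : Equiv.Perm (Fin n) → Equiv.Perm (Fin (2 * n)))
    (hρ : ∀ π, Interleaves n π (ρ π)) :
    hadamard (Cdet F (2 * n)) (interleavePoly F n) =
      ((Equiv.Perm.sign (ρ 1) : ℤ) : F) •
        ∑ π : Equiv.Perm (Fin n),
          MonoidAlgebra.single
            ((List.ofFn fun i : Fin (2 * n) => FreeMonoid.of (i, ρ π i)).prod) (1 : F) := by
  classical
  rw [Cdet, interleavePoly, hadamard_sum, Finset.smul_sum]
  simp_rw [hadamard_single, interleaveWord, MonoidAlgebra.smul_single, smul_eq_mul, mul_one]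
  rw [← Finset.sum_product']
  refine Finset.sum_bij_ne_zero
    (i := fun p _ hne =>
      (key n ρ hρ p.1 p.2 (by by_contra hc; exact hne (if_neg hc))).choose)
    (fun _ _ _ => Finset.mem_univ _) ?_ ?_ ?_
  · -- injectivity
    intro p1 h11 h12 p2 h21 h22 hi
    beta_reduce at hi
    obtain ⟨ha1, hb1⟩ := (key n ρ hρ p1.1 p1.2 (by by_contra hc; exact h12 (if_neg hc))).choose_spec
    obtain ⟨ha2, hb2⟩ := (key n ρ hρ p2.1 p2.2 (by by_contra hc; exact h22 (if_neg hc))).choose_spec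
    have : p1.1 = p2.1 := by rw [ha1, ha2, hi]
    have h2 : p1.2 = p2.2 := by rw [hb1, hb2, hi]
    exact Prod.ext this h2
  · -- surjectivity
    intro π _ hne
    refine ⟨(ρ π, ⇑π), Finset.mem_univ _, ?_, ?_⟩
    · rw [if_pos (word_rho n ρ hρ π)]
      intro hz
      have h0 := MonoidAlgebra.single_eq_zero.mp hz
      rcases Int.units_eq_one_or (Equiv.Perm.sign (ρ π)) with h | h <;>
        rw [h] at h0 <;> simp at h0
    · have hspec := (key n ρ hρ (ρ π) (⇑π) (by
        by_contra hc
        exact absurd (word_rho n ρ hρ π) hc)).choose_spec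
      exact (Equiv.coe_fn_injective hspec.2.symm)
  · -- value
    intro p h1 h2
    obtain ⟨ha, hb⟩ := (key n ρ hρ p.1 p.2 (by by_contra hc; exact h2 (if_neg hc))).choose_spec
    have hcond : (List.ofFn fun k : Fin (2 * n) => FreeMonoid.of (k, p.1 k)).prod
        = (List.ofFn fun k : Fin (2 * n) => FreeMonoid.of (k, tj n p.2 k)).prod := by
      by_contra hc; exact h2 (if_neg hc)
    rw [if_pos hcond]; conv_lhs => rw [ha]
    rw [sign_interleave n ρ hρ]
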